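/- Let m ≥ 1, let I be an infinite set, let E₁,…,E_m be real Banach spaces, let 1 ≤ q ≤ ∞, let r, t ∈ [1,∞), let s = (s₁,…,s_m), u = (u₁,…,u_m) ∈ [1,∞)^m, and let Λ ⊆ Γ ⊆ ℕ^m be nonempty index sets. Let D be the set of continuous m-linear operators T : E₁ × ⋯ × E_m → ℓ_q(I) that are Λ-(r;s)-summing but not Γ-(t;u)-summing. If D is nonempty, then there exists a linear subspace W of the space of continuous m-linear operators E₁ × ⋯ × E_m → ℓ_q(I) with W ⊆ D ∪ {0} and with linear dimension equal to the cardinality of I. -/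

import Mathlib

open Filter Topology ENNReal

noncomputable section

variable {m : ℕ} {E : Fin m → Type*} [∀ k, NormedAddCommGroup (E k)]
  [∀ k, NormedSpace ℝ (E k)] {F : Type*} [NormedAddCommGroup F] [NormedSpace ℝ F]

open Classical in
/-- The set of admissible constants `C > 0` in the defining inequality of a
`Λ`-`(r; s)`-summing continuous `m`-linear operator. -/
def lambdaSummingConsts (Λ : Set (Fin m → ℕ)) (r : ℝ) (s : Fin m → ℝ)
    (T : ContinuousMultilinearMap ℝ E F) : Set ℝ :=
  {C : ℝ | 0 < C ∧ ∀ (N : ℕ) (x : (k : Fin m) → ℕ → E k),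
    (∑ i ∈ (Fintype.piFinset fun _ => Finset.range N).filter (fun i => i ∈ Λ),
        ‖T (fun k => x k (i k))‖ ^ r) ^ (1 / r)
      ≤ C * ∏ k, ⨆ φ : {φ : E k →L[ℝ] ℝ // ‖φ‖ ≤ 1},
          (∑ j ∈ Finset.range N, |φ.1 (x k j)| ^ s k) ^ (1 / s k)}

/-- A continuous `m`-linear operator is `Λ`-`(r; s)`-summing if some `C > 0` is admissible. -/
def IsLambdaSumming (Λ : Set (Fin m → ℕ)) (r : ℝ) (s : Fin m → ℝ)
    (T : ContinuousMultilinearMap ℝ E F) : Prop :=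
  (lambdaSummingConsts Λ r s T).Nonempty

/-- The summing norm `π^Λ_{(r;s)}`: the infimum of the admissible constants. -/
def lambdaPi (Λ : Set (Fin m → ℕ)) (r : ℝ) (s : Fin m → ℝ)
    (T : ContinuousMultilinearMap ℝ E F) : ℝ :=
  sInf (lambdaSummingConsts Λ r s T)

universe v

/-! ### Auxiliary material: pushforward/pullback maps on `lp` spaces along injections -/

section lpmaps

open Function

variable {α β : Type*} {q : ℝ≥0∞} [Fact (1 ≤ q)]

lemma myq_ne_zero : q ≠ 0 := by
  have h : (1:ℝ≥0∞) ≤ q := Fact.out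
  intro h0; rw [h0] at h; simp at h

lemma myq_toReal_pos (hq : q ≠ ∞) : 0 < q.toReal :=
  ENNReal.toReal_pos myq_ne_zero hq

open Classical in
/-- extension by zero along `j`. -/
def myPushFun (j : α → β) (f : α → ℝ) (x : β) : ℝ :=
  if h : ∃ y, j y = x then f h.choose else 0

lemma pushFun_apply_of {j : α → β} (hj : Injective j) (f : α → ℝ) (y : α) :
    myPushFun j f (j y) = f y := by
  have h : ∃ y', j y' = j y := ⟨y, rfl⟩
  rw [myPushFun, dif_pos h]
  exact congrArg f (hj h.choose_spec)

lemma pushFun_apply_not {j : α → β} (f : α → ℝ) {x : β} (hx : ¬ ∃ y, j y = x) :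
    myPushFun j f x = 0 := by
  rw [myPushFun, dif_neg hx]

lemma pushFun_abs_le {j : α → β} (hj : Injective j) (f : lp (fun _ : α => ℝ) q) (x : β) :
    ‖myPushFun j (⇑f) x‖ ≤ ‖f‖ := by
  by_cases h : ∃ y, j y = x
  · obtain ⟨y, rfl⟩ := h
    rw [pushFun_apply_of hj]
    exact lp.norm_apply_le_norm myq_ne_zero f y
  · rw [pushFun_apply_not _ h]
    simpa using lp.norm_nonneg' f

lemma pushFun_sum_le {j : α → β} (hj : Injective j) (hq : q ≠ ∞)
    (f : lp (fun _ : α => ℝ) q) (s : Finset β) :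
    ∑ x ∈ s, ‖myPushFun j (⇑f) x‖ ^ q.toReal ≤ ‖f‖ ^ q.toReal := by
  have hqt : 0 < q.toReal := myq_toReal_pos hq
  have key : ∑ y ∈ s.preimage j hj.injOn, ‖myPushFun j (⇑f) (j y)‖ ^ q.toReal
      = ∑ x ∈ s, ‖myPushFun j (⇑f) x‖ ^ q.toReal := by
    refine Finset.sum_preimage j s hj.injOn
      (fun x => ‖myPushFun j (⇑f) x‖ ^ q.toReal) (fun x _ hx => ?_)
    simp only []
    rw [pushFun_apply_not _ (by simpa [Set.range] using hx)]
    simp [Real.zero_rpow hqt.ne']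
  rw [← key]
  calc ∑ y ∈ s.preimage j hj.injOn, ‖myPushFun j (⇑f) (j y)‖ ^ q.toReal
      = ∑ y ∈ s.preimage j hj.injOn, ‖f y‖ ^ q.toReal := by
        refine Finset.sum_congr rfl fun y _ => ?_
        rw [pushFun_apply_of hj]
    _ ≤ ‖f‖ ^ q.toReal := lp.sum_rpow_le_norm_rpow hqt f _

lemma pushFun_memℓp {j : α → β} (hj : Injective j) (f : lp (fun _ : α => ℝ) q) :
    Memℓp (myPushFun j (⇑f)) q := by
  rcases eq_or_ne q ∞ with hq | hq
  · subst hq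
    refine memℓp_infty ⟨‖f‖, ?_⟩
    rintro _ ⟨x, rfl⟩
    exact pushFun_abs_le hj f x
  · exact memℓp_gen' (C := ‖f‖ ^ q.toReal) (pushFun_sum_le hj hq f)

lemma pullFun_sum_le {j : α → β} (hj : Injective j) (hq : q ≠ ∞)
    (g : lp (fun _ : β => ℝ) q) (s : Finset α) :
    ∑ y ∈ s, ‖g (j y)‖ ^ q.toReal ≤ ‖g‖ ^ q.toReal := by
  classical
  have hqt : 0 < q.toReal := myq_toReal_pos hq
  calc ∑ y ∈ s, ‖g (j y)‖ ^ q.toReal = ∑ x ∈ s.image j, ‖g x‖ ^ q.toReal :=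
        by rw [Finset.sum_image (fun a _ b _ h => hj h)]
    _ ≤ ‖g‖ ^ q.toReal := lp.sum_rpow_le_norm_rpow hqt g _

lemma pullFun_memℓp {j : α → β} (hj : Injective j) (g : lp (fun _ : β => ℝ) q) :
    Memℓp (fun y => g (j y)) q := by
  rcases eq_or_ne q ∞ with hq | hq
  · subst hq
    refine memℓp_infty ⟨‖g‖, ?_⟩
    rintro _ ⟨y, rfl⟩
    exact lp.norm_apply_le_norm myq_ne_zero g (j y)
  · exact memℓp_gen' (C := ‖g‖ ^ q.toReal) (pullFun_sum_le hj hq g)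

/-- pullback of an `lp` function along an injection. -/
def lpPull (j : α → β) (hj : Injective j) (g : lp (fun _ : β => ℝ) q) :
    lp (fun _ : α => ℝ) q := ⟨fun y => g (j y), pullFun_memℓp hj g⟩

@[simp] lemma lpPull_apply (j : α → β) (hj : Injective j) (g : lp (fun _ : β => ℝ) q) (y : α) :
    lpPull j hj g y = g (j y) := rfl

lemma norm_lpPull_le (j : α → β) (hj : Injective j) (g : lp (fun _ : β => ℝ) q) :
    ‖lpPull j hj g‖ ≤ ‖g‖ := by
  rcases eq_or_ne q ∞ with hq | hq
  · subst hq
    exact lp.norm_le_of_forall_le (lp.norm_nonneg' g)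
      (fun y => lp.norm_apply_le_norm myq_ne_zero g (j y))
  · exact lp.norm_le_of_forall_sum_le (myq_toReal_pos hq) (lp.norm_nonneg' g)
      (pullFun_sum_le hj hq g)

lemma pushFun_norm_le {j : α → β} (hj : Injective j) (f : lp (fun _ : α => ℝ) q)
    (h : Memℓp (myPushFun j (⇑f)) q) :
    ‖(⟨myPushFun j (⇑f), h⟩ : lp (fun _ : β => ℝ) q)‖ ≤ ‖f‖ := by
  rcases eq_or_ne q ∞ with hq | hq
  · subst hq
    exact lp.norm_le_of_forall_le (lp.norm_nonneg' f) (fun x => pushFun_abs_le hj f x)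
  · exact lp.norm_le_of_forall_sum_le (myq_toReal_pos hq) (lp.norm_nonneg' f)
      (pushFun_sum_le hj hq f)

/-- pushforward (extension by zero) along an injection, as a continuous linear map. -/
def lpPush (j : α → β) (hj : Injective j) :
    lp (fun _ : α => ℝ) q →L[ℝ] lp (fun _ : β => ℝ) q :=
  LinearMap.mkContinuous
    { toFun := fun f => ⟨myPushFun j (⇑f), pushFun_memℓp hj f⟩
      map_add' := fun f g => by
        apply lp.ext
        funext x
        have hc : ⇑(f + g) = ⇑f + ⇑g := lp.coeFn_add f g
        by_cases h : ∃ y, j y = x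
        · obtain ⟨y, rfl⟩ := h
          show myPushFun j (⇑(f + g)) (j y) = myPushFun j (⇑f) (j y) + myPushFun j (⇑g) (j y)
          rw [pushFun_apply_of hj, pushFun_apply_of hj, pushFun_apply_of hj, hc]
          rfl
        · show myPushFun j (⇑(f + g)) x = myPushFun j (⇑f) x + myPushFun j (⇑g) x
          rw [pushFun_apply_not _ h, pushFun_apply_not _ h, pushFun_apply_not _ h, add_zero]
      map_smul' := fun c f => by
        apply lp.ext
        funext x
        have hc : ⇑(c • f) = c • ⇑f := lp.coeFn_smul c f
        by_cases h : ∃ y, j y = x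
        · obtain ⟨y, rfl⟩ := h
          show myPushFun j (⇑(c • f)) (j y) = c • myPushFun j (⇑f) (j y)
          rw [pushFun_apply_of hj, pushFun_apply_of hj, hc]
          rfl
        · show myPushFun j (⇑(c • f)) x = c • myPushFun j (⇑f) x
          rw [pushFun_apply_not _ h, pushFun_apply_not _ h, smul_zero] }
    1 (fun f => by simpa using pushFun_norm_le hj f _)

lemma lpPush_apply_of (j : α → β) (hj : Injective j) (f : lp (fun _ : α => ℝ) q) (y : α) :
    lpPush j hj f (j y) = f y := pushFun_apply_of hj _ y

lemma lpPush_apply_not (j : α → β) (hj : Injective j) (f : lp (fun _ : α => ℝ) q)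
    {x : β} (hx : ¬ ∃ y, j y = x) : lpPush j hj f x = 0 := pushFun_apply_not _ hx

end lpmaps

/-! ### Auxiliary material: transfer of summing constants -/

section summing

/-- The product of suprema on the RHS is nonnegative. -/
lemma rhs_prod_nonneg {s : Fin m → ℝ} (N : ℕ) (x : (k : Fin m) → ℕ → E k) :
    0 ≤ ∏ k, ⨆ φ : {φ : E k →L[ℝ] ℝ // ‖φ‖ ≤ 1},
        (∑ j ∈ Finset.range N, |φ.1 (x k j)| ^ s k) ^ (1 / s k) := by
  refine Finset.prod_nonneg fun k _ => ?_
  refine Real.iSup_nonneg fun φ => ?_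
  refine Real.rpow_nonneg ?_ _
  exact Finset.sum_nonneg fun j _ => Real.rpow_nonneg (abs_nonneg _) _

/-- Core transfer lemma for summing constants under pointwise norm domination. -/
lemma summing_core {Λ : Set (Fin m → ℕ)} {r : ℝ} (hr : 1 ≤ r) {s : Fin m → ℝ}
    {T T' : ContinuousMultilinearMap ℝ E F} {c C : ℝ} (hc : 0 < c)
    (hC : C ∈ lambdaSummingConsts Λ r s T)
    (h : ∀ y : (k : Fin m) → E k, ‖T' y‖ ≤ c * ‖T y‖) :
    (c * C) ∈ lambdaSummingConsts Λ r s T' := by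
  classical
  obtain ⟨hC0, hCle⟩ := hC
  have hr0 : (0:ℝ) < r := lt_of_lt_of_le one_pos hr
  refine ⟨mul_pos hc hC0, fun N x => ?_⟩
  set S := (Fintype.piFinset fun _ : Fin m => Finset.range N).filter (fun i => i ∈ Λ) with hS
  set P := ∏ k, ⨆ φ : {φ : E k →L[ℝ] ℝ // ‖φ‖ ≤ 1},
      (∑ j ∈ Finset.range N, |φ.1 (x k j)| ^ s k) ^ (1 / s k) with hP
  have step1 : ∑ i ∈ S, ‖T' (fun k => x k (i k))‖ ^ r
      ≤ c ^ r * ∑ i ∈ S, ‖T (fun k => x k (i k))‖ ^ r := by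
    rw [Finset.mul_sum]
    refine Finset.sum_le_sum fun i _ => ?_
    calc ‖T' (fun k => x k (i k))‖ ^ r ≤ (c * ‖T (fun k => x k (i k))‖) ^ r :=
          Real.rpow_le_rpow (norm_nonneg _) (h _) hr0.le
      _ = c ^ r * ‖T (fun k => x k (i k))‖ ^ r :=
          Real.mul_rpow hc.le (norm_nonneg _)
  have hsum_nonneg : (0:ℝ) ≤ ∑ i ∈ S, ‖T (fun k => x k (i k))‖ ^ r :=
    Finset.sum_nonneg fun i _ => Real.rpow_nonneg (norm_nonneg _) _
  have hsum_nonneg' : (0:ℝ) ≤ ∑ i ∈ S, ‖T' (fun k => x k (i k))‖ ^ r :=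
    Finset.sum_nonneg fun i _ => Real.rpow_nonneg (norm_nonneg _) _
  calc (∑ i ∈ S, ‖T' (fun k => x k (i k))‖ ^ r) ^ (1/r)
      ≤ (c ^ r * ∑ i ∈ S, ‖T (fun k => x k (i k))‖ ^ r) ^ (1/r) :=
        Real.rpow_le_rpow hsum_nonneg' step1 (by positivity)
    _ = (c ^ r) ^ (1/r) * (∑ i ∈ S, ‖T (fun k => x k (i k))‖ ^ r) ^ (1/r) :=
        Real.mul_rpow (Real.rpow_nonneg hc.le _) hsum_nonneg
    _ = c * (∑ i ∈ S, ‖T (fun k => x k (i k))‖ ^ r) ^ (1/r) := by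
        rw [← Real.rpow_mul hc.le, mul_one_div_cancel hr0.ne', Real.rpow_one]
    _ ≤ c * (C * P) := by
        exact mul_le_mul_of_nonneg_left (hCle N x) hc.le
    _ = (c * C) * P := by ring

/-- The zero operator is summing. -/
lemma zero_isLambdaSumming (Λ : Set (Fin m → ℕ)) {r : ℝ} (hr : 1 ≤ r) (s : Fin m → ℝ) :
    IsLambdaSumming Λ r s (0 : ContinuousMultilinearMap ℝ E F) := by
  classical
  have hr0 : (0:ℝ) < r := lt_of_lt_of_le one_pos hr
  refine ⟨1, one_pos, fun N x => ?_⟩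
  have : ∀ i ∈ (Fintype.piFinset fun _ : Fin m => Finset.range N).filter (fun i => i ∈ Λ),
      ‖(0 : ContinuousMultilinearMap ℝ E F) (fun k => x k (i k))‖ ^ r = 0 := by
    intro i _
    simp [Real.zero_rpow hr0.ne']
  rw [Finset.sum_congr rfl this, Finset.sum_const, smul_zero,
    Real.zero_rpow (by positivity : (1/r : ℝ) ≠ 0), one_mul]
  exact rhs_prod_nonneg N x

end summing

set_option maxHeartbeats 1000000 in
theorem stmt9 {m : ℕ} (hm : 1 ≤ m) (I : Type v) [Infinite I]
    (E : Fin m → Type v)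
    [∀ k, NormedAddCommGroup (E k)] [∀ k, NormedSpace ℝ (E k)] [∀ k, CompleteSpace (E k)]
    (q : ℝ≥0∞) [Fact (1 ≤ q)]
    (r t : ℝ) (hr : 1 ≤ r) (ht : 1 ≤ t)
    (s u : Fin m → ℝ) (hs : ∀ k, 1 ≤ s k) (hu : ∀ k, 1 ≤ u k)
    (Λ Γ : Set (Fin m → ℕ)) (hΛ : Λ.Nonempty) (hΓ : Γ.Nonempty) (hΛΓ : Λ ⊆ Γ)
    (D : Set (ContinuousMultilinearMap ℝ E (lp (fun _ : I => ℝ) q)))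
    (hD : D = {T | IsLambdaSumming Λ r s T ∧ ¬ IsLambdaSumming Γ t u T})
    (hDne : D.Nonempty) :
    ∃ W : Submodule ℝ (ContinuousMultilinearMap ℝ E (lp (fun _ : I => ℝ) q)),
      (W : Set (ContinuousMultilinearMap ℝ E (lp (fun _ : I => ℝ) q))) ⊆ D ∪ {0} ∧
      Module.rank ℝ W = Cardinal.mk I := by
  classical
  obtain ⟨T, hT⟩ := hDne
  have hT' := hT
  rw [hD] at hT'
  obtain ⟨hTΛ, hTΓ⟩ := hT'
  -- an equivalence `I × I ≃ I`
  have hcard : Cardinal.mk (I × I) = Cardinal.mk I := by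
    rw [Cardinal.mk_prod]
    simp only [Cardinal.lift_id]
    exact Cardinal.mul_eq_self (Cardinal.aleph0_le_mk I)
  obtain ⟨e⟩ := Cardinal.eq.mp hcard
  have hj : ∀ i : I, Function.Injective (fun y : I => e (i, y)) := by
    intro i a b hab
    have h1 : (i, a) = (i, b) := e.injective hab
    exact (Prod.mk.injEq _ _ _ _ ▸ h1).2
  set v : I → ContinuousMultilinearMap ℝ E (lp (fun _ : I => ℝ) q) :=
    fun i => ((lpPush (fun y : I => e (i, y)) (hj i)).compContinuousMultilinearMap T) with hv
  -- key computation: pulling back a combination along the `i₀`-th slice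
  have key_pull : ∀ (sfin : Finset I) (a : I → ℝ) (i₀ : I), i₀ ∈ sfin →
      ∀ g : lp (fun _ : I => ℝ) q,
        lpPull (fun y : I => e (i₀, y)) (hj i₀)
          ((∑ i ∈ sfin, a i • lpPush (fun y : I => e (i, y)) (hj i)) g) = a i₀ • g := by
    intro sfin a i₀ hi₀ g
    apply lp.ext
    funext y
    have h1 : ((∑ i ∈ sfin, a i • lpPush (q := q) (fun y : I => e (i, y)) (hj i)) g)
        = ∑ i ∈ sfin, a i • (lpPush (fun y : I => e (i, y)) (hj i) g) := by
      rw [ContinuousLinearMap.sum_apply]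
      simp
    have h2 : (lpPull (fun y : I => e (i₀, y)) (hj i₀)
          ((∑ i ∈ sfin, a i • lpPush (fun y : I => e (i, y)) (hj i)) g)) y
        = ∑ i ∈ sfin, a i * (lpPush (fun y : I => e (i, y)) (hj i) g) (e (i₀, y)) := by
      rw [lpPull_apply, h1, lp.coeFn_sum]
      rw [Finset.sum_apply]
      refine Finset.sum_congr rfl fun i _ => ?_
      rw [lp.coeFn_smul]
      rfl
    rw [h2]
    have h3 : ∑ i ∈ sfin, a i * (lpPush (fun y : I => e (i, y)) (hj i) g) (e (i₀, y))
        = a i₀ * g y := by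
      refine Finset.sum_eq_single_of_mem i₀ hi₀ (fun i _ hne => ?_) |>.trans ?_
      · have : ¬ ∃ y', e (i, y') = e (i₀, y) := by
          rintro ⟨y', hy'⟩
          exact hne (congrArg Prod.fst (e.injective hy'))
        rw [lpPush_apply_not _ _ _ this, mul_zero]
      · rw [lpPush_apply_of (fun y : I => e (i₀, y)) (hj i₀) g y]
    rw [h3]
    have : (a i₀ • g) y = a i₀ * g y := by rw [lp.coeFn_smul]; rfl
    rw [this]
  -- lower norm bound for combinations
  have key_lower : ∀ (sfin : Finset I) (a : I → ℝ) (i₀ : I), i₀ ∈ sfin →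
      ∀ g : lp (fun _ : I => ℝ) q,
        |a i₀| * ‖g‖ ≤ ‖(∑ i ∈ sfin, a i • lpPush (fun y : I => e (i, y)) (hj i)) g‖ := by
    intro sfin a i₀ hi₀ g
    calc |a i₀| * ‖g‖ = ‖a i₀ • g‖ := by
          rw [lp.norm_const_smul (myq_ne_zero) g, Real.norm_eq_abs]
      _ = ‖lpPull (fun y : I => e (i₀, y)) (hj i₀)
            ((∑ i ∈ sfin, a i • lpPush (fun y : I => e (i, y)) (hj i)) g)‖ := by
          rw [key_pull sfin a i₀ hi₀ g]
      _ ≤ _ := norm_lpPull_le _ _ _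
  -- combinations as compositions
  have comp_eq : ∀ (sfin : Finset I) (a : I → ℝ),
      (∑ i ∈ sfin, a i • v i)
        = ((∑ i ∈ sfin, a i • lpPush (fun y : I => e (i, y)) (hj i)) :
            lp (fun _ : I => ℝ) q →L[ℝ] lp (fun _ : I => ℝ) q).compContinuousMultilinearMap T := by
    intro sfin a
    ext x
    simp [hv, ContinuousMultilinearMap.sum_apply, ContinuousMultilinearMap.smul_apply,
      ContinuousLinearMap.sum_apply, ContinuousLinearMap.smul_apply]
  -- nonzero combinations are in `D`
  have inD : ∀ (sfin : Finset I) (a : I → ℝ) (i₀ : I), i₀ ∈ sfin → a i₀ ≠ 0 →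
      (∑ i ∈ sfin, a i • v i) ∈ D := by
    intro sfin a i₀ hi₀ ha
    set Lc : lp (fun _ : I => ℝ) q →L[ℝ] lp (fun _ : I => ℝ) q :=
      ∑ i ∈ sfin, a i • lpPush (fun y : I => e (i, y)) (hj i) with hLc
    have habs : (0:ℝ) < |a i₀| := abs_pos.mpr ha
    rw [hD]
    constructor
    · obtain ⟨C, hC⟩ := hTΛ
      refine ⟨(‖Lc‖ + 1) * C, ?_⟩
      rw [comp_eq sfin a]
      refine summing_core hr (by positivity) hC (fun y => ?_)
      calc ‖(Lc.compContinuousMultilinearMap T) y‖ = ‖Lc (T y)‖ := by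
            rw [congrFun (ContinuousLinearMap.compContinuousMultilinearMap_coe Lc T) y]
            rfl
        _ ≤ ‖Lc‖ * ‖T y‖ := Lc.le_opNorm _
        _ ≤ (‖Lc‖ + 1) * ‖T y‖ :=
            mul_le_mul_of_nonneg_right (by linarith) (norm_nonneg _)
    · rintro ⟨C', hC'⟩
      refine hTΓ ⟨|a i₀|⁻¹ * C', ?_⟩
      refine summing_core ht (inv_pos.mpr habs) hC' (fun y => ?_)
      have h4 : ‖(∑ i ∈ sfin, a i • v i) y‖ = ‖Lc (T y)‖ := by
        rw [comp_eq sfin a,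
          congrFun (ContinuousLinearMap.compContinuousMultilinearMap_coe Lc T) y]
        rfl
      rw [h4, inv_mul_eq_div, le_div_iff₀ habs, mul_comm]
      exact key_lower sfin a i₀ hi₀ (T y)
  -- linear independence
  have hTne : ¬ (T = 0) := by
    intro h0
    exact hTΓ (h0 ▸ zero_isLambdaSumming Γ ht u)
  have hlin : LinearIndependent ℝ v := by
    rw [linearIndependent_iff']
    intro sfin a hsum i₀ hi₀
    by_contra ha
    set Lc : lp (fun _ : I => ℝ) q →L[ℝ] lp (fun _ : I => ℝ) q :=
      ∑ i ∈ sfin, a i • lpPush (fun y : I => e (i, y)) (hj i) with hLc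
    have h0 : Lc.compContinuousMultilinearMap T = 0 := by
      rw [← comp_eq sfin a]; exact hsum
    have hTzero : T = 0 := by
      ext x
      have h5 : Lc (T x) = 0 := by
        have := congrArg (fun (S : ContinuousMultilinearMap ℝ E (lp (fun _ : I => ℝ) q)) => S x) h0
        simpa using this
      have h6 : a i₀ • T x = (0 : lp (fun _ : I => ℝ) q) := by
        rw [← key_pull sfin a i₀ hi₀ (T x), h5]
        apply lp.ext
        funext y
        simp [lp.coeFn_zero]
      have h7 := (smul_eq_zero.mp h6).resolve_left ha
      simp [h7]
    exact hTne hTzero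
  refine ⟨Submodule.span ℝ (Set.range v), ?_, ?_⟩
  · intro S hS
    rcases eq_or_ne S 0 with h | h
    · right; simp [h]
    · left
      rw [SetLike.mem_coe, Finsupp.mem_span_range_iff_exists_finsupp] at hS
      obtain ⟨a, ha⟩ := hS
      have hane : ∃ i₀, a i₀ ≠ 0 := by
        by_contra h'
        push_neg at h'
        apply h
        rw [← ha]
        have : a = 0 := Finsupp.ext fun i => h' i
        rw [this, Finsupp.sum_zero_index]
      obtain ⟨i₀, hai₀⟩ := hane
      have hmem : i₀ ∈ a.support := Finsupp.mem_support_iff.mpr hai₀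
      have hsum : a.sum (fun i c => c • v i) = ∑ i ∈ a.support, a i • v i := rfl
      rw [← ha, hsum]
      exact inD a.support a i₀ hmem hai₀
  · rw [rank_span hlin]
    exact Cardinal.mk_range_eq v hlin.injective
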